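/- Let q ≥ 1 and let X₁,…,Xₙ be independent random variables in a measurable space S with an independent copy X'₁,…,X'ₙ, and let ε₁,…,εₙ be i.i.d. Rademacher random variables independent of both. Let h_{mi} : S → ℝ be measurable functions with E|h_{mi}(Xᵢ)|^q < ∞ and E[h_{mi}(Xᵢ)] = 0 for all m = 1,…,d and i = 1,…,n. Then 2^{-q} E[max_{1≤m≤d} |Σ_{i=1}^n εᵢ h_{mi}(Xᵢ)|^q] ≤ E[max_{1≤m≤d} |Σ_{i=1}^n h_{mi}(Xᵢ)|^q] ≤ 2^q E[max_{1≤m≤d} |Σ_{i=1}^n εᵢ h_{mi}(Xᵢ)|^q]. -/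

import Mathlib

open MeasureTheory ProbabilityTheory

variable {q : ℝ} {d : ℕ}

lemma rpow_two_add_le (hq : 1 ≤ q) {a b : ℝ} (ha : 0 ≤ a) (hb : 0 ≤ b) :
    (a + b) ^ q ≤ 2 ^ (q - 1) * (a ^ q + b ^ q) := by
  have h := NNReal.rpow_add_le_mul_rpow_add_rpow a.toNNReal b.toNNReal hq
  have := NNReal.coe_le_coe.mpr h
  push_cast at this
  rwa [Real.coe_toNNReal a ha, Real.coe_toNNReal b hb] at this

lemma continuous_normq (hq : 1 ≤ q) :
    Continuous (fun v : Fin d → ℝ => ‖v‖ ^ q) :=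
  (Real.continuous_rpow_const (by linarith)).comp continuous_norm

lemma convexOn_normq (hq : 1 ≤ q) :
    ConvexOn ℝ Set.univ (fun v : Fin d → ℝ => ‖v‖ ^ q) := by
  refine ⟨convex_univ, fun x _ y _ a b ha hb hab => ?_⟩
  have h1 : ‖a • x + b • y‖ ^ q ≤ (a * ‖x‖ + b * ‖y‖) ^ q := by
    refine Real.rpow_le_rpow (norm_nonneg _) ?_ (by linarith)
    calc ‖a • x + b • y‖ ≤ ‖a • x‖ + ‖b • y‖ := norm_add_le _ _
      _ = a * ‖x‖ + b * ‖y‖ := by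
          rw [norm_smul, norm_smul, Real.norm_eq_abs, Real.norm_eq_abs, abs_of_nonneg ha,
            abs_of_nonneg hb]
  refine h1.trans ?_
  exact (convexOn_rpow hq).2 (Set.mem_Ici.2 (norm_nonneg x)) (Set.mem_Ici.2 (norm_nonneg y))
    ha hb hab

lemma jensen_normq {α : Type*} [MeasurableSpace α] {ν : Measure α} [IsProbabilityMeasure ν]
    (hq : 1 ≤ q) (f : α → Fin d → ℝ) (hfi : Integrable f ν)
    (hgi : Integrable (fun a => ‖f a‖ ^ q) ν) :
    ‖∫ a, f a ∂ν‖ ^ q ≤ ∫ a, ‖f a‖ ^ q ∂ν :=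
  (convexOn_normq hq).map_integral_le ((continuous_normq hq).continuousOn) isClosed_univ
    (Filter.Eventually.of_forall fun a => Set.mem_univ _) hfi hgi

section prodhelp
variable {E₁ E₂ : Type*} [MeasurableSpace E₁] [MeasurableSpace E₂]
  {ν₁ : Measure E₁} {ν₂ : Measure E₂} [IsProbabilityMeasure ν₁] [IsProbabilityMeasure ν₂]

lemma integral_comp_fst (f : E₁ → ℝ) (hf : AEStronglyMeasurable f ν₁) :
    ∫ p : E₁ × E₂, f p.1 ∂(ν₁.prod ν₂) = ∫ y, f y ∂ν₁ := by
  have h1 : (ν₁.prod ν₂).map Prod.fst = ν₁ := by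
    rw [Measure.map_fst_prod]; simp
  rw [← h1] at hf
  rw [← integral_map measurable_fst.aemeasurable hf, h1]

lemma integral_comp_snd (f : E₂ → ℝ) (hf : AEStronglyMeasurable f ν₂) :
    ∫ p : E₁ × E₂, f p.2 ∂(ν₁.prod ν₂) = ∫ y, f y ∂ν₂ := by
  have h1 : (ν₁.prod ν₂).map Prod.snd = ν₂ := by
    rw [Measure.map_snd_prod]; simp
  rw [← h1] at hf
  rw [← integral_map measurable_snd.aemeasurable hf, h1]

lemma integrable_comp_fst {f : E₁ → ℝ} (hfi : Integrable f ν₁) :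
    Integrable (fun p : E₁ × E₂ => f p.1) (ν₁.prod ν₂) := by
  have h1 : (ν₁.prod ν₂).map Prod.fst = ν₁ := by
    rw [Measure.map_fst_prod]; simp
  exact (integrable_map_measure (g := f) (h1.symm ▸ hfi.aestronglyMeasurable)
    measurable_fst.aemeasurable).mp (h1.symm ▸ hfi)

lemma integrable_comp_snd {f : E₂ → ℝ} (hfi : Integrable f ν₂) :
    Integrable (fun p : E₁ × E₂ => f p.2) (ν₁.prod ν₂) := by
  have h1 : (ν₁.prod ν₂).map Prod.snd = ν₂ := by
    rw [Measure.map_snd_prod]; simp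
  exact (integrable_map_measure (g := f) (h1.symm ▸ hfi.aestronglyMeasurable)
    measurable_snd.aemeasurable).mp (h1.symm ▸ hfi)

end prodhelp

lemma normq_nonneg (v : Fin d → ℝ) : 0 ≤ ‖v‖ ^ q := Real.rpow_nonneg (norm_nonneg v) q

lemma main_compare {α : Type*} [MeasurableSpace α] {μ : Measure α} [IsProbabilityMeasure μ]
    (hq : 1 ≤ q) (Y Z : α → Fin d → ℝ)
    (hYm : Measurable Y) (hZm : Measurable Z) (hind : IndepFun Y Z μ)
    (hYi : Integrable Y μ) (hZi : Integrable Z μ)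
    (hYc : ∫ a, Y a ∂μ = 0) (hZc : ∫ a, Z a ∂μ = 0)
    (hYq : Integrable (fun a => ‖Y a‖ ^ q) μ) (hZq : Integrable (fun a => ‖Z a‖ ^ q) μ) :
    ∫ a, ‖Y a + Z a‖ ^ q ∂μ ≤ 2 ^ q * ∫ a, ‖Y a - Z a‖ ^ q ∂μ := by
  set ν₁ := μ.map Y with hν₁
  set ν₂ := μ.map Z with hν₂
  haveI : IsProbabilityMeasure ν₁ := Measure.isProbabilityMeasure_map hYm.aemeasurable
  haveI : IsProbabilityMeasure ν₂ := Measure.isProbabilityMeasure_map hZm.aemeasurable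
  have hmap : μ.map (fun a => (Y a, Z a)) = ν₁.prod ν₂ :=
    (indepFun_iff_map_prod_eq_prod_map_map hYm.aemeasurable hZm.aemeasurable).mp hind
  have hpush : ∀ φ : (Fin d → ℝ) × (Fin d → ℝ) → ℝ, Continuous φ →
      ∫ a, φ (Y a, Z a) ∂μ = ∫ p, φ p ∂(ν₁.prod ν₂) := by
    intro φ hφ
    rw [← hmap, integral_map (hYm.prodMk hZm).aemeasurable hφ.aestronglyMeasurable]
  have hcont_add : Continuous fun p : (Fin d → ℝ) × (Fin d → ℝ) => ‖p.1 + p.2‖ ^ q :=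
    (continuous_normq hq).comp (continuous_fst.add continuous_snd)
  have hcont_sub : Continuous fun p : (Fin d → ℝ) × (Fin d → ℝ) => ‖p.1 - p.2‖ ^ q :=
    (continuous_normq hq).comp (continuous_fst.sub continuous_snd)
  have hYq' : Integrable (fun y : Fin d → ℝ => ‖y‖ ^ q) ν₁ :=
    (integrable_map_measure (continuous_normq hq).aestronglyMeasurable hYm.aemeasurable).mpr hYq
  have hZq' : Integrable (fun z : Fin d → ℝ => ‖z‖ ^ q) ν₂ :=
    (integrable_map_measure (continuous_normq hq).aestronglyMeasurable hZm.aemeasurable).mpr hZq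
  have hdom : Integrable (fun p : (Fin d → ℝ) × (Fin d → ℝ) =>
      2 ^ (q-1) * (‖p.1‖ ^ q + ‖p.2‖ ^ q)) (ν₁.prod ν₂) :=
    ((integrable_comp_fst hYq').add (integrable_comp_snd hZq')).const_mul _
  have hbound_sub : ∀ p : (Fin d → ℝ) × (Fin d → ℝ),
      ‖p.1 - p.2‖ ^ q ≤ 2 ^ (q-1) * (‖p.1‖ ^ q + ‖p.2‖ ^ q) := fun p =>
    le_trans (Real.rpow_le_rpow (norm_nonneg _) (norm_sub_le _ _) (by linarith))
      (rpow_two_add_le hq (norm_nonneg _) (norm_nonneg _))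
  have hbound_add : ∀ p : (Fin d → ℝ) × (Fin d → ℝ),
      ‖p.1 + p.2‖ ^ q ≤ 2 ^ (q-1) * (‖p.1‖ ^ q + ‖p.2‖ ^ q) := fun p =>
    le_trans (Real.rpow_le_rpow (norm_nonneg _) (norm_add_le _ _) (by linarith))
      (rpow_two_add_le hq (norm_nonneg _) (norm_nonneg _))
  have hint_sub : Integrable (fun p : (Fin d → ℝ) × (Fin d → ℝ) => ‖p.1 - p.2‖ ^ q)
      (ν₁.prod ν₂) := by
    refine hdom.mono' hcont_sub.aestronglyMeasurable ?_
    exact Filter.Eventually.of_forall fun p => by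
      rw [Real.norm_eq_abs, abs_of_nonneg (normq_nonneg _)]; exact hbound_sub p
  have hint_add : Integrable (fun p : (Fin d → ℝ) × (Fin d → ℝ) => ‖p.1 + p.2‖ ^ q)
      (ν₁.prod ν₂) := by
    refine hdom.mono' hcont_add.aestronglyMeasurable ?_
    exact Filter.Eventually.of_forall fun p => by
      rw [Real.norm_eq_abs, abs_of_nonneg (normq_nonneg _)]; exact hbound_add p
  have hZid : Integrable (fun z : Fin d → ℝ => z) ν₂ :=
    (integrable_map_measure aestronglyMeasurable_id hZm.aemeasurable).mpr hZi
  have hYid : Integrable (fun y : Fin d → ℝ => y) ν₁ :=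
    (integrable_map_measure aestronglyMeasurable_id hYm.aemeasurable).mpr hYi
  have hZmean : ∫ z : Fin d → ℝ, z ∂ν₂ = 0 := by
    show ∫ z : Fin d → ℝ, id z ∂ν₂ = 0
    rw [hν₂, integral_map hZm.aemeasurable aestronglyMeasurable_id]; exact hZc
  have hYmean : ∫ y : Fin d → ℝ, y ∂ν₁ = 0 := by
    show ∫ y : Fin d → ℝ, id y ∂ν₁ = 0
    rw [hν₁, integral_map hYm.aemeasurable aestronglyMeasurable_id]; exact hYc
  have step1 : ∫ y : Fin d → ℝ, ‖y‖ ^ q ∂ν₁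
      ≤ ∫ p : (Fin d → ℝ) × (Fin d → ℝ), ‖p.1 - p.2‖ ^ q ∂(ν₁.prod ν₂) := by
    rw [integral_prod _ hint_sub]
    refine integral_mono hYq' hint_sub.integral_prod_left fun y => ?_
    have hiz : Integrable (fun z : Fin d → ℝ => y - z) ν₂ := (integrable_const y).sub hZid
    have hgz : Integrable (fun z : Fin d → ℝ => ‖y - z‖ ^ q) ν₂ := by
      refine (((integrable_const (‖y‖ ^ q)).add hZq').const_mul (2 ^ (q-1))).mono'
        (((continuous_normq hq).comp (continuous_const.sub continuous_id)).aestronglyMeasurable) ?_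
      refine Filter.Eventually.of_forall fun z => ?_
      rw [Real.norm_eq_abs, abs_of_nonneg (normq_nonneg _)]
      exact le_trans (Real.rpow_le_rpow (norm_nonneg _) (norm_sub_le _ _) (by linarith))
        (rpow_two_add_le hq (norm_nonneg _) (norm_nonneg _))
    have hj := jensen_normq hq (fun z : Fin d → ℝ => y - z) hiz hgz
    have h0 : ∫ z : Fin d → ℝ, (y - z) ∂ν₂ = y := by
      rw [integral_sub (integrable_const y) hZid, hZmean, sub_zero, integral_const]
      simp
    rw [h0] at hj
    simpa using hj
  have step2 : ∫ z : Fin d → ℝ, ‖z‖ ^ q ∂ν₂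
      ≤ ∫ p : (Fin d → ℝ) × (Fin d → ℝ), ‖p.1 - p.2‖ ^ q ∂(ν₁.prod ν₂) := by
    rw [integral_prod_symm _ hint_sub]
    refine integral_mono hZq' hint_sub.integral_prod_right fun z => ?_
    have hiy : Integrable (fun y : Fin d → ℝ => y - z) ν₁ := hYid.sub (integrable_const z)
    have hgy : Integrable (fun y : Fin d → ℝ => ‖y - z‖ ^ q) ν₁ := by
      refine ((hYq'.add (integrable_const (‖z‖ ^ q))).const_mul (2 ^ (q-1))).mono'
        (((continuous_normq hq).comp (continuous_id.sub continuous_const)).aestronglyMeasurable) ?_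
      refine Filter.Eventually.of_forall fun y => ?_
      rw [Real.norm_eq_abs, abs_of_nonneg (normq_nonneg _)]
      exact le_trans (Real.rpow_le_rpow (norm_nonneg _) (norm_sub_le _ _) (by linarith))
        (rpow_two_add_le hq (norm_nonneg _) (norm_nonneg _))
    have hj := jensen_normq hq (fun y : Fin d → ℝ => y - z) hiy hgy
    have h0 : ∫ y : Fin d → ℝ, (y - z) ∂ν₁ = -z := by
      rw [integral_sub hYid (integrable_const z), hYmean, integral_const, zero_sub]
      simp
    rw [h0, norm_neg] at hj
    simpa using hj
  have hsplit : ∫ p : (Fin d → ℝ) × (Fin d → ℝ), 2 ^ (q-1) * (‖p.1‖ ^ q + ‖p.2‖ ^ q)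
        ∂(ν₁.prod ν₂)
      = 2 ^ (q-1) * ((∫ y : Fin d → ℝ, ‖y‖ ^ q ∂ν₁) + ∫ z : Fin d → ℝ, ‖z‖ ^ q ∂ν₂) := by
    rw [integral_const_mul, integral_add (integrable_comp_fst hYq') (integrable_comp_snd hZq'),
      integral_comp_fst _ (continuous_normq hq).aestronglyMeasurable,
      integral_comp_snd _ (continuous_normq hq).aestronglyMeasurable]
  have h2q : (2:ℝ) ^ (q - 1) * 2 = 2 ^ q := by
    rw [Real.rpow_sub (by norm_num : (0:ℝ) < 2), Real.rpow_one]; ring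
  calc ∫ a, ‖Y a + Z a‖ ^ q ∂μ
      = ∫ p : (Fin d → ℝ) × (Fin d → ℝ), ‖p.1 + p.2‖ ^ q ∂(ν₁.prod ν₂) := hpush _ hcont_add
    _ ≤ ∫ p : (Fin d → ℝ) × (Fin d → ℝ), 2 ^ (q-1) * (‖p.1‖ ^ q + ‖p.2‖ ^ q) ∂(ν₁.prod ν₂) :=
        integral_mono hint_add hdom hbound_add
    _ = 2 ^ (q-1) * ((∫ y : Fin d → ℝ, ‖y‖ ^ q ∂ν₁) + ∫ z : Fin d → ℝ, ‖z‖ ^ q ∂ν₂) := hsplit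
    _ ≤ 2 ^ (q-1) * ((∫ p : (Fin d → ℝ) × (Fin d → ℝ), ‖p.1 - p.2‖ ^ q ∂(ν₁.prod ν₂))
        + ∫ p : (Fin d → ℝ) × (Fin d → ℝ), ‖p.1 - p.2‖ ^ q ∂(ν₁.prod ν₂)) :=
        mul_le_mul_of_nonneg_left (add_le_add step1 step2)
          (le_of_lt (Real.rpow_pos_of_pos (by norm_num) _))
    _ = 2 ^ q * ∫ p : (Fin d → ℝ) × (Fin d → ℝ), ‖p.1 - p.2‖ ^ q ∂(ν₁.prod ν₂) := by
        rw [← h2q]; ring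
    _ = 2 ^ q * ∫ a, ‖Y a - Z a‖ ^ q ∂μ := by rw [hpush _ hcont_sub]

lemma main_compare2 {α : Type*} [MeasurableSpace α] {μ : Measure α} [IsProbabilityMeasure μ]
    (hq : 1 ≤ q) (Y Z : α → Fin d → ℝ)
    (hYm : Measurable Y) (hZm : Measurable Z) (hind : IndepFun Y Z μ)
    (hYi : Integrable Y μ) (hZi : Integrable Z μ)
    (hYc : ∫ a, Y a ∂μ = 0) (hZc : ∫ a, Z a ∂μ = 0)
    (hYq : Integrable (fun a => ‖Y a‖ ^ q) μ) (hZq : Integrable (fun a => ‖Z a‖ ^ q) μ) :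
    ∫ a, ‖Y a - Z a‖ ^ q ∂μ ≤ 2 ^ q * ∫ a, ‖Y a + Z a‖ ^ q ∂μ := by
  have h1 := main_compare hq Y (fun a => - Z a) hYm hZm.neg
    (hind.comp measurable_id measurable_neg) hYi hZi.neg
    hYc (by rw [integral_neg, hZc, neg_zero])
    hYq (by simpa only [norm_neg] using hZq)
  simpa only [← sub_eq_add_neg, sub_neg_eq_add] using h1

lemma norm_pi_le_sum (v : Fin d → ℝ) : ‖v‖ ≤ ∑ m, |v m| := by
  have hnn : (0:ℝ) ≤ ∑ m, |v m| := Finset.sum_nonneg fun m _ => abs_nonneg (v m)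
  refine (pi_norm_le_iff_of_nonneg hnn).2 fun m => ?_
  rw [Real.norm_eq_abs]
  exact Finset.single_le_sum (fun i _ => abs_nonneg (v i)) (Finset.mem_univ m)

lemma iSup_abs_rpow (hq : 1 ≤ q) (v : Fin d → ℝ) :
    (⨆ m : Fin d, |v m| ^ q) = ‖v‖ ^ q := by
  have hq0 : q ≠ 0 := by linarith
  rcases Nat.eq_zero_or_pos d with rfl | hd
  · rw [Real.iSup_of_isEmpty, Subsingleton.elim v 0, norm_zero, Real.zero_rpow hq0]
  · have : Nonempty (Fin d) := ⟨⟨0, hd⟩⟩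
    have hnorm : ‖v‖ = Finset.univ.sup' Finset.univ_nonempty (fun m => |v m|) := by
      apply le_antisymm
      · refine (pi_norm_le_iff_of_nonneg ?_).2 fun m => ?_
        · exact le_trans (abs_nonneg _)
            (Finset.le_sup' (f := fun m => |v m|) (Finset.mem_univ (Classical.arbitrary (Fin d))))
        · exact (Real.norm_eq_abs _).le.trans
            (Finset.le_sup' (f := fun m => |v m|) (Finset.mem_univ m))
      · exact Finset.sup'_le _ _ fun m _ => by
          simpa [Real.norm_eq_abs] using norm_le_pi_norm v m
    rw [← Finset.sup'_univ_eq_ciSup, hnorm]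
    obtain ⟨m₀, _, hm₀⟩ := Finset.exists_mem_eq_sup' Finset.univ_nonempty (fun m => |v m|)
    rw [hm₀]
    apply le_antisymm
    · refine Finset.sup'_le _ _ fun m _ => ?_
      refine Real.rpow_le_rpow (abs_nonneg _) ?_ (by linarith)
      rw [← hm₀]
      exact Finset.le_sup' (f := fun m => |v m|) (Finset.mem_univ m)
    · exact Finset.le_sup' (f := fun m => |v m| ^ q) (Finset.mem_univ m₀)

lemma normq_le_sum (hq : 1 ≤ q) (v : Fin d → ℝ) : ‖v‖ ^ q ≤ ∑ m, |v m| ^ q := by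
  rw [← iSup_abs_rpow hq v]
  rcases Nat.eq_zero_or_pos d with rfl | hd
  · rw [Real.iSup_of_isEmpty]; simp
  · have : Nonempty (Fin d) := ⟨⟨0, hd⟩⟩
    rw [← Finset.sup'_univ_eq_ciSup]
    exact Finset.sup'_le _ _ fun m _ =>
      Finset.single_le_sum (fun i _ => Real.rpow_nonneg (abs_nonneg _) _) (Finset.mem_univ m)

lemma rpow_sum_le (hq : 1 ≤ q) {ι : Type*} (A : Finset ι) (a : ι → ℝ)
    (ha : ∀ i ∈ A, 0 ≤ a i) :
    (∑ i ∈ A, a i) ^ q ≤ (A.card : ℝ) ^ q * ∑ i ∈ A, a i ^ q := by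
  rcases A.eq_empty_or_nonempty with rfl | hA
  · simp [Real.zero_rpow (by linarith : q ≠ 0)]
  · obtain ⟨i₀, hi₀, hmax⟩ := A.exists_max_image a hA
    calc (∑ i ∈ A, a i) ^ q ≤ ((A.card : ℝ) * a i₀) ^ q := by
          refine Real.rpow_le_rpow (Finset.sum_nonneg ha) ?_ (by linarith)
          have := Finset.sum_le_card_nsmul A a (a i₀) fun i hi => hmax i hi
          simpa [nsmul_eq_mul] using this
      _ = (A.card : ℝ) ^ q * a i₀ ^ q :=
          Real.mul_rpow (Nat.cast_nonneg _) (ha i₀ hi₀)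
      _ ≤ (A.card : ℝ) ^ q * ∑ i ∈ A, a i ^ q := by
          refine mul_le_mul_of_nonneg_left ?_ (Real.rpow_nonneg (Nat.cast_nonneg _) _)
          exact Finset.single_le_sum (fun i hi => Real.rpow_nonneg (ha i hi) _ ) hi₀

lemma fixed_sign {Ω S : Type*} [MeasureSpace Ω] [IsProbabilityMeasure (ℙ : Measure Ω)]
    [MeasurableSpace S] {n d : ℕ} {q : ℝ} (hq : 1 ≤ q)
    (X : Fin n → Ω → S) (hmX : ∀ i, Measurable (X i))
    (hindepX : iIndepFun X ℙ)
    (h : Fin d → Fin n → S → ℝ) (hmeas : ∀ m i, Measurable (h m i))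
    (hcen : ∀ m i, ∫ ω, h m i (X i ω) ∂ℙ = 0)
    (hmom : ∀ m i, Integrable (fun ω => |h m i (X i ω)| ^ q) ℙ)
    (s : Fin n → ℝ) (hs : ∀ i, s i = 1 ∨ s i = -1) :
    (∫ ω, ‖fun m => ∑ i, h m i (X i ω)‖ ^ q ∂ℙ)
        ≤ 2 ^ q * (∫ ω, ‖fun m => ∑ i, s i * h m i (X i ω)‖ ^ q ∂ℙ) ∧
    (∫ ω, ‖fun m => ∑ i, s i * h m i (X i ω)‖ ^ q ∂ℙ)
        ≤ 2 ^ q * ∫ ω, ‖fun m => ∑ i, h m i (X i ω)‖ ^ q ∂ℙ := by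
  classical
  set A : Finset (Fin n) := Finset.univ.filter (fun i => s i = 1) with hA
  set Y : Ω → Fin d → ℝ := fun ω m => ∑ i ∈ A, h m i (X i ω) with hY
  set Z : Ω → Fin d → ℝ := fun ω m => ∑ i ∈ Aᶜ, h m i (X i ω) with hZ
  -- decompositions
  have hsum : ∀ ω, (fun m => ∑ i, h m i (X i ω)) = Y ω + Z ω := by
    intro ω; funext m
    rw [Pi.add_apply, hY, hZ]
    simp only
    rw [hA, Finset.compl_filter, Finset.sum_filter_add_sum_filter_not]
  have hsum' : ∀ ω, (fun m => ∑ i, s i * h m i (X i ω)) = Y ω - Z ω := by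
    intro ω; funext m
    rw [Pi.sub_apply, hY, hZ]
    simp only
    have e1 : ∑ i ∈ A, s i * h m i (X i ω) = ∑ i ∈ A, h m i (X i ω) := by
      refine Finset.sum_congr rfl fun i hi => ?_
      rw [hA] at hi
      rw [(Finset.mem_filter.mp hi).2, one_mul]
    have e2 : ∑ i ∈ Aᶜ, s i * h m i (X i ω) = -∑ i ∈ Aᶜ, h m i (X i ω) := by
      rw [← Finset.sum_neg_distrib]
      refine Finset.sum_congr rfl fun i hi => ?_
      have : s i = -1 := by
        rcases hs i with h1 | h2
        · exfalso
          rw [hA] at hi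
          exact absurd (Finset.mem_filter.mpr ⟨Finset.mem_univ i, h1⟩)
            (Finset.mem_compl.mp hi)
        · exact h2
      rw [this]; ring
    calc ∑ i, s i * h m i (X i ω)
        = ∑ i ∈ A, s i * h m i (X i ω) + ∑ i ∈ Aᶜ, s i * h m i (X i ω) := by
          rw [hA, Finset.compl_filter, Finset.sum_filter_add_sum_filter_not]
      _ = ∑ i ∈ A, h m i (X i ω) - ∑ i ∈ Aᶜ, h m i (X i ω) := by
          rw [e1, e2]; ring
  -- measurability
  have hYm : Measurable Y := measurable_pi_lambda _ fun m =>
    Finset.measurable_sum _ fun i _ => (hmeas m i).comp (hmX i)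
  have hZm : Measurable Z := measurable_pi_lambda _ fun m =>
    Finset.measurable_sum _ fun i _ => (hmeas m i).comp (hmX i)
  -- independence
  have hind : IndepFun Y Z ℙ := by
    have hI := hindepX.indepFun_finset A Aᶜ disjoint_compl_right hmX
    have hΦA : Measurable (fun (g : ↥A → S) => (fun m => ∑ i : ↥A, h m i.1 (g i)) : (↥A → S) → Fin d → ℝ) :=
      measurable_pi_lambda _ fun m => Finset.measurable_sum _ fun i _ =>
        (hmeas m i.1).comp (measurable_pi_apply i)
    have hΦB : Measurable (fun (g : ↥Aᶜ → S) => (fun m => ∑ i : ↥Aᶜ, h m i.1 (g i)) : (↥Aᶜ → S) → Fin d → ℝ) :=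
      measurable_pi_lambda _ fun m => Finset.measurable_sum _ fun i _ =>
        (hmeas m i.1).comp (measurable_pi_apply i)
    have := hI.comp hΦA hΦB
    convert this using 1
    · funext ω; funext m; rw [hY]; simp only [Function.comp]
      exact (Finset.sum_coe_sort A (fun i => h m i (X i ω))).symm
    · funext ω; funext m; rw [hZ]; simp only [Function.comp]
      exact (Finset.sum_coe_sort Aᶜ (fun i => h m i (X i ω))).symm
  -- basic integrability of each h m i (X i ·)
  have hint : ∀ m i, Integrable (fun ω => h m i (X i ω)) ℙ := by
    intro m i
    refine ((integrable_const (1:ℝ)).add (hmom m i)).mono'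
      (((hmeas m i).comp (hmX i)).aestronglyMeasurable) ?_
    refine Filter.Eventually.of_forall fun ω => ?_
    simp only [Pi.add_apply, Real.norm_eq_abs]
    rcases le_or_gt (|h m i (X i ω)|) 1 with h1 | h1
    · nlinarith [Real.rpow_nonneg (abs_nonneg (h m i (X i ω))) q]
    · have h2 : |h m i (X i ω)| ≤ |h m i (X i ω)| ^ q := by
        calc |h m i (X i ω)| = |h m i (X i ω)| ^ (1:ℝ) := (Real.rpow_one _).symm
          _ ≤ _ := Real.rpow_le_rpow_of_exponent_le h1.le hq
      linarith
  -- coordinate integrability and vector integrability / centering for sums over any B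
  have key : ∀ B : Finset (Fin n),
      Integrable (fun ω => (fun m => ∑ i ∈ B, h m i (X i ω)) : Ω → Fin d → ℝ) ℙ ∧
      (∫ ω, (fun m => ∑ i ∈ B, h m i (X i ω)) ∂ℙ) = 0 ∧
      Integrable (fun ω => ‖(fun m => ∑ i ∈ B, h m i (X i ω))‖ ^ q) ℙ := by
    intro B
    have hWm : Measurable (fun ω => (fun m => ∑ i ∈ B, h m i (X i ω)) : Ω → Fin d → ℝ) :=
      measurable_pi_lambda _ fun m => Finset.measurable_sum _ fun i _ => (hmeas m i).comp (hmX i)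
    have hcoord : ∀ m, Integrable (fun ω => ∑ i ∈ B, h m i (X i ω)) ℙ :=
      fun m => integrable_finset_sum _ fun i _ => hint m i
    have hWi : Integrable (fun ω => (fun m => ∑ i ∈ B, h m i (X i ω)) : Ω → Fin d → ℝ) ℙ := by
      refine (integrable_finset_sum (μ := (ℙ : Measure Ω)) Finset.univ
        (f := fun m ω => ∑ i ∈ B, |h m i (X i ω)|) fun m _ =>
          integrable_finset_sum _ fun i _ => (hint m i).abs).mono'
        hWm.aestronglyMeasurable ?_
      refine Filter.Eventually.of_forall fun ω => ?_
      refine le_trans (norm_pi_le_sum _) ?_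
      refine Finset.sum_le_sum fun m _ => ?_
      exact (Finset.abs_sum_le_sum_abs _ _)
    refine ⟨hWi, ?_, ?_⟩
    · funext m
      have hproj := (ContinuousLinearMap.proj (R := ℝ) (φ := fun _ : Fin d => ℝ) m).integral_comp_comm hWi
      have : (∫ ω, (fun m => ∑ i ∈ B, h m i (X i ω)) ∂ℙ) m = ∫ ω, ∑ i ∈ B, h m i (X i ω) ∂ℙ := by
        exact hproj.symm
      rw [Pi.zero_apply, this, integral_finset_sum _ fun i _ => hint m i]
      exact Finset.sum_eq_zero fun i _ => hcen m i
    · -- q-th moment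
      refine (integrable_finset_sum (μ := (ℙ : Measure Ω)) Finset.univ
        (f := fun m ω => (B.card : ℝ) ^ q * ∑ i ∈ B, |h m i (X i ω)| ^ q) fun m _ =>
          (integrable_finset_sum _ fun i _ => hmom m i).const_mul _).mono'
        (((continuous_normq hq).measurable.comp hWm).aestronglyMeasurable) ?_
      refine Filter.Eventually.of_forall fun ω => ?_
      rw [Real.norm_eq_abs, abs_of_nonneg (normq_nonneg _)]
      refine le_trans (normq_le_sum hq _) (Finset.sum_le_sum fun m _ => ?_)
      calc |∑ i ∈ B, h m i (X i ω)| ^ q ≤ (∑ i ∈ B, |h m i (X i ω)|) ^ q :=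
            Real.rpow_le_rpow (abs_nonneg _) (Finset.abs_sum_le_sum_abs _ _) (by linarith)
        _ ≤ (B.card : ℝ) ^ q * ∑ i ∈ B, |h m i (X i ω)| ^ q :=
            rpow_sum_le hq B _ fun i _ => abs_nonneg _
  obtain ⟨hYi, hYc, hYq⟩ := key A
  obtain ⟨hZi, hZc, hZq⟩ := key Aᶜ
  have c1 := main_compare hq Y Z hYm hZm hind hYi hZi hYc hZc hYq hZq
  have c2 := main_compare2 hq Y Z hYm hZm hind hYi hZi hYc hZc hYq hZq
  have e1 : (fun ω => ‖fun m => ∑ i, h m i (X i ω)‖ ^ q) = fun ω => ‖Y ω + Z ω‖ ^ q := by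
    funext ω; rw [hsum ω]
  have e2 : (fun ω => ‖fun m => ∑ i, s i * h m i (X i ω)‖ ^ q) = fun ω => ‖Y ω - Z ω‖ ^ q := by
    funext ω; rw [hsum' ω]
  constructor
  · calc ∫ ω, ‖fun m => ∑ i, h m i (X i ω)‖ ^ q ∂ℙ = ∫ ω, ‖Y ω + Z ω‖ ^ q ∂ℙ := by rw [e1]
      _ ≤ 2 ^ q * ∫ ω, ‖Y ω - Z ω‖ ^ q ∂ℙ := c1
      _ = 2 ^ q * ∫ ω, ‖fun m => ∑ i, s i * h m i (X i ω)‖ ^ q ∂ℙ := by rw [e2]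
  · calc ∫ ω, ‖fun m => ∑ i, s i * h m i (X i ω)‖ ^ q ∂ℙ = ∫ ω, ‖Y ω - Z ω‖ ^ q ∂ℙ := by rw [e2]
      _ ≤ 2 ^ q * ∫ ω, ‖Y ω + Z ω‖ ^ q ∂ℙ := c2
      _ = 2 ^ q * ∫ ω, ‖fun m => ∑ i, h m i (X i ω)‖ ^ q ∂ℙ := by rw [e1]

theorem stmt3 {Ω S : Type*} [MeasureSpace Ω] [IsProbabilityMeasure (ℙ : Measure Ω)]
    [MeasurableSpace S] {n d : ℕ} (q : ℝ) (hq : 1 ≤ q)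
    (X : Fin n → Ω → S) (ε : Fin n → Ω → ℝ)
    (hmX : ∀ i, Measurable (X i)) (hmε : ∀ i, Measurable (ε i))
    (hindepX : iIndepFun X ℙ)
    (hindepε : iIndepFun ε ℙ)
    (hrad : ∀ i, ℙ (ε i ⁻¹' {1}) = 1/2 ∧ ℙ (ε i ⁻¹' {-1}) = 1/2)
    (hindepXε : IndepFun (fun ω i => X i ω) (fun ω i => ε i ω) ℙ)
    (h : Fin d → Fin n → S → ℝ)
    (hmeas : ∀ m i, Measurable (h m i))
    (hcen : ∀ m i, ∫ ω, h m i (X i ω) ∂ℙ = 0)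
    (hmom : ∀ m i, Integrable (fun ω => |h m i (X i ω)| ^ q) ℙ) :
    (2 : ℝ) ^ (-q) * (∫ ω, ⨆ m : Fin d, |∑ i, ε i ω * h m i (X i ω)| ^ q ∂ℙ)
      ≤ (∫ ω, ⨆ m : Fin d, |∑ i, h m i (X i ω)| ^ q ∂ℙ) ∧
    (∫ ω, ⨆ m : Fin d, |∑ i, h m i (X i ω)| ^ q ∂ℙ)
      ≤ (2 : ℝ) ^ q * ∫ ω, ⨆ m : Fin d, |∑ i, ε i ω * h m i (X i ω)| ^ q ∂ℙ := by
  classical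
  simp_rw [iSup_abs_rpow hq]
  set Xv : Ω → Fin n → S := fun ω i => X i ω with hXv
  set εv : Ω → Fin n → ℝ := fun ω i => ε i ω with hεv
  have hmXv : Measurable Xv := measurable_pi_lambda _ hmX
  have hmεv : Measurable εv := measurable_pi_lambda _ hmε
  set μX := Measure.map Xv (ℙ : Measure Ω) with hμX
  set με := Measure.map εv (ℙ : Measure Ω) with hμε
  haveI : IsProbabilityMeasure μX := Measure.isProbabilityMeasure_map hmXv.aemeasurable
  haveI : IsProbabilityMeasure με := Measure.isProbabilityMeasure_map hmεv.aemeasurable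
  have hmapp : Measure.map (fun ω => (Xv ω, εv ω)) (ℙ : Measure Ω) = μX.prod με :=
    (indepFun_iff_map_prod_eq_prod_map_map hmXv.aemeasurable hmεv.aemeasurable).mp hindepXε
  set F : (Fin n → S) × (Fin n → ℝ) → ℝ :=
    fun p => ‖(fun m => ∑ i, p.2 i * h m i (p.1 i) : Fin d → ℝ)‖ ^ q with hF
  have hFm : Measurable F := by
    apply ((continuous_normq hq).measurable).comp
    exact measurable_pi_lambda _ fun m => Finset.measurable_sum _ fun i _ =>
      ((measurable_pi_apply i).comp measurable_snd).mul
        ((hmeas m i).comp ((measurable_pi_apply i).comp measurable_fst))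
  -- the sign set
  set K : Set (Fin n → ℝ) := {e | ∀ i, e i = 1 ∨ e i = -1} with hK
  have hKmeas : MeasurableSet K := by
    have : K = ⋂ i, (fun e : Fin n → ℝ => e i) ⁻¹' ({1, -1} : Set ℝ) := by
      ext e; simp [hK, Set.mem_iInter]
    rw [this]
    exact MeasurableSet.iInter fun i => (measurable_pi_apply i) (by measurability)
  have haeΩ : ∀ᵐ ω ∂(ℙ : Measure Ω), εv ω ∈ K := by
    have hper : ∀ i, ∀ᵐ ω ∂(ℙ : Measure Ω), ε i ω = 1 ∨ ε i ω = -1 := by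
      intro i
      have hA : MeasurableSet (ε i ⁻¹' {1}) := (hmε i) (measurableSet_singleton 1)
      have hB : MeasurableSet (ε i ⁻¹' {-1}) := (hmε i) (measurableSet_singleton (-1))
      have hU : ℙ (ε i ⁻¹' {1} ∪ ε i ⁻¹' {-1}) = 1 := by
        rw [measure_union _ hB]
        · rw [(hrad i).1, (hrad i).2]
          simp only [one_div]
          exact ENNReal.inv_two_add_inv_two
        · refine Set.disjoint_left.mpr fun ω h1 h2 => ?_
          simp only [Set.mem_preimage, Set.mem_singleton_iff] at h1 h2
          rw [h1] at h2; norm_num at h2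
      have hcompl : ℙ ((ε i ⁻¹' {1} ∪ ε i ⁻¹' {-1})ᶜ) = 0 := by
        rw [measure_compl (hA.union hB) (measure_ne_top _ _), hU, measure_univ, tsub_self]
      rw [ae_iff]
      refine measure_mono_null ?_ hcompl
      intro ω hω
      simp only [Set.mem_compl_iff, Set.mem_union, Set.mem_preimage, Set.mem_singleton_iff]
      push_neg
      simp only [Set.mem_setOf_eq] at hω
      push_neg at hω
      exact hω
    filter_upwards [ae_all_iff.mpr hper] with ω hω
    exact hω
  have haeε : ∀ᵐ e ∂με, e ∈ K := by
    rw [hμε]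
    exact (ae_map_iff hmεv.aemeasurable hKmeas).mpr haeΩ
  -- dominator
  set D : (Fin n → S) → ℝ := fun x => ∑ m, (n : ℝ) ^ q * ∑ i, |h m i (x i)| ^ q with hD
  have hDm : Measurable D := by
    refine Finset.measurable_sum _ fun m _ => Measurable.const_mul ?_ _
    exact Finset.measurable_sum _ fun i _ =>
      ((Real.continuous_rpow_const (by linarith : (0:ℝ) ≤ q)).measurable).comp
        (((hmeas m i).comp (measurable_pi_apply i)).abs)
  have hDint : Integrable D μX := by
    rw [hμX, integrable_map_measure hDm.aestronglyMeasurable hmXv.aemeasurable]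
    exact integrable_finset_sum _ fun m _ =>
      (integrable_finset_sum _ fun i _ => hmom m i).const_mul _
  have hFbound : ∀ p : (Fin n → S) × (Fin n → ℝ), p.2 ∈ K → F p ≤ D p.1 := by
    intro p hp
    rw [hF, hD]
    refine le_trans (normq_le_sum hq _) (Finset.sum_le_sum fun m _ => ?_)
    calc |∑ i, p.2 i * h m i (p.1 i)| ^ q
        ≤ (∑ i, |h m i (p.1 i)|) ^ q := by
          refine Real.rpow_le_rpow (abs_nonneg _)
            (le_trans (Finset.abs_sum_le_sum_abs _ _) ?_) (by linarith)
          refine Finset.sum_le_sum fun i _ => ?_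
          rw [abs_mul]
          have : |p.2 i| = 1 := by rcases hp i with h1 | h1 <;> rw [h1] <;> norm_num
          rw [this, one_mul]
      _ ≤ ((Finset.univ : Finset (Fin n)).card : ℝ) ^ q * ∑ i, |h m i (p.1 i)| ^ q :=
          rpow_sum_le hq _ _ fun i _ => abs_nonneg _
      _ = (n : ℝ) ^ q * ∑ i, |h m i (p.1 i)| ^ q := by
          rw [Finset.card_univ, Fintype.card_fin]
  have haeprod : ∀ᵐ p ∂(μX.prod με), p.2 ∈ K := by
    rw [ae_iff]
    have : {p : (Fin n → S) × (Fin n → ℝ) | ¬ p.2 ∈ K} = Set.univ ×ˢ Kᶜ := by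
      ext p; simp [Set.mem_prod]
    rw [this, Measure.prod_prod, measure_univ, one_mul]
    rw [ae_iff] at haeε
    exact haeε
  have hFint : Integrable F (μX.prod με) := by
    refine (integrable_comp_fst hDint).mono' hFm.aestronglyMeasurable ?_
    filter_upwards [haeprod] with p hp
    rw [Real.norm_eq_abs, abs_of_nonneg (normq_nonneg _)]
    exact hFbound p hp
  -- the quantities
  set L : ℝ := ∫ ω, ‖(fun m => ∑ i, ε i ω * h m i (X i ω) : Fin d → ℝ)‖ ^ q ∂ℙ with hL
  set I₀ : ℝ := ∫ ω, ‖(fun m => ∑ i, h m i (X i ω) : Fin d → ℝ)‖ ^ q ∂ℙ with hI₀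
  have hLprod : L = ∫ p, F p ∂(μX.prod με) := by
    rw [hL, ← hmapp, integral_map (hmXv.prodMk hmεv).aemeasurable hFm.aestronglyMeasurable]
  set G : (Fin n → ℝ) → ℝ := fun e => ∫ x, F (x, e) ∂μX with hG
  have hGint : Integrable G με := by rw [hG]; exact hFint.integral_prod_right
  have hLG : L = ∫ e, G e ∂με := by rw [hLprod, integral_prod_symm _ hFint, hG]
  have hGsand : ∀ᵐ e ∂με, I₀ ≤ 2 ^ q * G e ∧ G e ≤ 2 ^ q * I₀ := by
    filter_upwards [haeε] with e he
    have hGe : G e = ∫ ω, F (Xv ω, e) ∂ℙ := by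
      rw [hG]
      show (∫ x, F (x, e) ∂μX) = _
      rw [hμX]
      exact integral_map hmXv.aemeasurable
        ((hFm.comp (measurable_id.prodMk measurable_const)).aestronglyMeasurable)
    have hfs := fixed_sign hq X hmX hindepX h hmeas hcen hmom e he
    rw [hGe]
    exact ⟨hfs.1, hfs.2⟩
  have hupper : L ≤ 2 ^ q * I₀ := by
    rw [hLG]
    calc ∫ e, G e ∂με ≤ ∫ _e, 2 ^ q * I₀ ∂με := by
          refine integral_mono_ae hGint (integrable_const _) ?_
          filter_upwards [hGsand] with e he using he.2
      _ = 2 ^ q * I₀ := by rw [integral_const]; simp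
  have hlower : I₀ ≤ 2 ^ q * L := by
    have : I₀ = ∫ _e, I₀ ∂με := by rw [integral_const]; simp
    rw [this, hLG]
    calc ∫ _e, I₀ ∂με ≤ ∫ e, 2 ^ q * G e ∂με := by
          refine integral_mono_ae (integrable_const _) (hGint.const_mul _) ?_
          filter_upwards [hGsand] with e he using he.1
      _ = 2 ^ q * ∫ e, G e ∂με := integral_const_mul _ _
  have h2pos : (0:ℝ) < 2 ^ q := Real.rpow_pos_of_pos (by norm_num) q
  have h2inv : (2:ℝ) ^ (-q) = ((2:ℝ) ^ q)⁻¹ := Real.rpow_neg (by norm_num) q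
  constructor
  · rw [h2inv, inv_mul_le_iff₀ h2pos]
    exact hupper
  · exact hlower
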